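/- Let n, L be integers with 1 ≤ n < L - 1 and L ≤ 2^(n/16). Let r be the largest integer such that C(r + n - 1, r) < L - 1. Then there is an absolute constant c > 0 such that r ≥ c · log L / log(n / log L), where logs are base 2. -/

import Mathlib

open Real

/-- Monotonicity of `x ↦ x * log (a / x)` on `(0, a / e]`. -/
lemma mylem_mono {a x y : ℝ} (hx : 0 < x) (hxy : x ≤ y) (hay : Real.exp 1 * y ≤ a) :
    x * Real.log (a / x) ≤ y * Real.log (a / y) := by
  have he : (0:ℝ) < Real.exp 1 := Real.exp_pos 1
  have hy : 0 < y := lt_of_lt_of_le hx hxy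
  have ha : 0 < a := lt_of_lt_of_le (by positivity) hay
  have hsplit : Real.log (a / x) = Real.log (a / y) + Real.log (y / x) := by
    rw [← Real.log_mul (by positivity) (by positivity)]
    congr 1
    field_simp
  have h2 : Real.log (y / x) ≤ y / x - 1 := Real.log_le_sub_one_of_pos (by positivity)
  have h3 : 1 ≤ Real.log (a / y) := by
    have : Real.exp 1 ≤ a / y := (le_div_iff₀ hy).2 (by linarith)
    calc (1:ℝ) = Real.log (Real.exp 1) := (Real.log_exp 1).symm
      _ ≤ Real.log (a / y) := Real.log_le_log he this
  have hxy' : x * (y / x - 1) = y - x := by field_simp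
  calc x * Real.log (a / x) = x * Real.log (a / y) + x * Real.log (y / x) := by
        rw [hsplit]; ring
    _ ≤ x * Real.log (a / y) + x * (y / x - 1) := by
        have := mul_le_mul_of_nonneg_left h2 hx.le; linarith
    _ = x * Real.log (a / y) + (y - x) := by rw [hxy']
    _ ≤ x * Real.log (a / y) + (y - x) * Real.log (a / y) := by nlinarith
    _ = y * Real.log (a / y) := by ring

set_option maxHeartbeats 1000000 in
/-- Claim 2: for `1 ≤ n < L - 1` and `L ≤ 2^(n/16)`, the largest integer `r` with
`C(r+n-1, r) < L - 1` satisfies `r ≥ c · log L / log(n / log L)` for an absolute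
constant `c > 0` (logs base 2). -/
theorem stmt3 : ∃ c : ℝ, 0 < c ∧ ∀ n L r : ℕ, 1 ≤ n → n < L - 1 →
    (L : ℝ) ≤ (2 : ℝ) ^ ((n : ℝ) / 16) →
    IsGreatest {r' : ℕ | (r' + n - 1).choose r' < L - 1} r →
    c * Real.logb 2 L / Real.logb 2 ((n : ℝ) / Real.logb 2 L) ≤ (r : ℝ) := by
  refine ⟨1/64, by norm_num, ?_⟩
  intro n L r h1 h2 hL hG
  have hb : (1:ℝ) < 2 := one_lt_two
  have hL3 : 3 ≤ L := by omega
  -- r ≥ 1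
  have h1mem : 1 ∈ {r' : ℕ | (r' + n - 1).choose r' < L - 1} := by
    simp only [Set.mem_setOf_eq]
    have : 1 + n - 1 = n := by omega
    rw [this, Nat.choose_one_right]
    omega
  have hr1 : 1 ≤ r := hG.2 h1mem
  -- maximality at r+1
  have hchoose : L - 1 ≤ (r + n).choose (r + 1) := by
    by_contra hc
    push_neg at hc
    have : r + 1 ∈ {r' : ℕ | (r' + n - 1).choose r' < L - 1} := by
      simp only [Set.mem_setOf_eq]
      have : r + 1 + n - 1 = r + n := by omega
      rw [this]; exact hc
    have := hG.2 this
    omega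
  set T : ℝ := Real.logb 2 L with hT
  set D : ℝ := Real.logb 2 ((n : ℝ) / T) with hD
  have hLpos : (0:ℝ) < L := by positivity
  have hLr3 : (3:ℝ) ≤ (L:ℝ) := by exact_mod_cast hL3
  have hT1 : 1 < T := by
    have : Real.logb 2 2 < Real.logb 2 3 := Real.logb_lt_logb hb (by norm_num) (by norm_num)
    have h2 : Real.logb 2 3 ≤ Real.logb 2 L := Real.logb_le_logb_of_le hb (by norm_num) hLr3
    rw [Real.logb_self_eq_one (by norm_num : (1:ℝ) < 2)] at this
    linarith
  have hT0 : 0 < T := by linarith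
  have hTn : 16 * T ≤ (n : ℝ) := by
    have : T ≤ Real.logb 2 ((2:ℝ) ^ ((n : ℝ) / 16)) := Real.logb_le_logb_of_le hb hLpos hL
    rwa [Real.logb_rpow (by norm_num) (by norm_num), le_div_iff₀ (by norm_num : (0:ℝ) < 16), mul_comm] at this
  have hn1 : (1:ℝ) ≤ (n:ℝ) := by exact_mod_cast h1
  have h16 : (16:ℝ) ≤ (n:ℝ) / T := (le_div_iff₀ hT0).2 (by linarith)
  have hlogb16 : Real.logb 2 (16:ℝ) = 4 := by
    have : (16:ℝ) = 2 ^ (4:ℕ) := by norm_num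
    rw [this, Real.logb_pow, Real.logb_self_eq_one (by norm_num : (1:ℝ) < 2)]
    norm_num
  have hD4 : 4 ≤ D := by
    have := Real.logb_le_logb_of_le hb (by norm_num : (0:ℝ) < 16) h16
    rwa [hlogb16] at this
  have hD0 : 0 < D := by linarith
  -- T > 4
  have hT4 : 4 < T := by
    have hLn : (n:ℝ) + 2 ≤ (L:ℝ) := by
      have : n + 2 ≤ L := by omega
      exact_mod_cast this
    have h16T : (16:ℝ) * T < (n:ℝ) + 2 := by linarith
    have step : Real.logb 2 (16 * T) ≤ T := by
      have := Real.logb_le_logb_of_le hb (by positivity : (0:ℝ) < 16 * T)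
        (le_trans (le_of_lt h16T) hLn)
      exact this
    have hsplit : Real.logb 2 (16 * T) = 4 + Real.logb 2 T := by
      rw [Real.logb_mul (by norm_num) (by positivity), hlogb16]
    have hlogT : 0 < Real.logb 2 T := Real.logb_pos hb hT1
    linarith [hsplit ▸ step]
  -- contradiction setup
  by_contra hcon
  push_neg at hcon
  have hgoalpos : (r:ℝ) < 1/64 * T / D := hcon
  set y : ℝ := 2 * (1/64 * T / D) with hy
  have hrpos : (1:ℝ) ≤ (r:ℝ) := by exact_mod_cast hr1
  have hsy : (r:ℝ) + 1 ≤ y := by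
    have : (r:ℝ) + 1 ≤ 2 * (r:ℝ) := by linarith
    nlinarith
  have hypos : 0 < y := by positivity
  have hyT : y ≤ T / 128 := by
    have h1 : 1/64 * T / D ≤ T / 256 := by
      rw [div_le_div_iff₀ hD0 (by norm_num : (0:ℝ) < 256)]
      nlinarith
    rw [hy]; linarith
  have hrn : (r:ℝ) ≤ (n:ℝ) := by nlinarith
  -- the binomial bound
  set x : ℝ := (r:ℝ) + 1 with hx
  have hxpos : 0 < x := by positivity
  have key1 : (((r + n).choose (r + 1) : ℕ) : ℝ) ≤ ((r:ℝ) + n) ^ (r+1) / ((r+1).factorial : ℝ) := by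
    have h := Nat.choose_le_pow_div (α := ℝ) (r+1) (r+n)
    push_cast at h ⊢
    convert h using 2 <;> push_cast <;> ring
  have key2 : x ^ (r+1) ≤ Real.exp 1 ^ (r+1) * ((r+1).factorial : ℝ) := by
    have h := Real.pow_div_factorial_le_exp (x := x) (by positivity) (r+1)
    have hexp : Real.exp x = Real.exp 1 ^ (r+1) := by
      rw [← Real.exp_nat_mul]
      push_cast [hx]
      ring_nf
    have hfpos : (0:ℝ) < ((r+1).factorial : ℝ) := by positivity
    rw [div_le_iff₀ hfpos] at h
    rw [hexp] at h
    linarith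
  have he3 : Real.exp 1 < 3 := by
    have := Real.exp_one_lt_d9; linarith
  have he0 : 0 < Real.exp 1 := Real.exp_pos 1
  have hem : Real.exp 1 * ((r:ℝ) + n) ≤ 6 * n := by
    have hmn0 : (0:ℝ) ≤ (r:ℝ) + n := by positivity
    have := mul_le_mul_of_nonneg_right he3.le hmn0
    linarith
  have key3 : ((r:ℝ) + n) ^ (r+1) / ((r+1).factorial : ℝ) ≤ (6 * n / x) ^ (r+1) := by
    have hfpos : (0:ℝ) < ((r+1).factorial : ℝ) := by positivity
    have hmn : (0:ℝ) ≤ (r:ℝ) + n := by positivity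
    rw [div_pow, div_le_div_iff₀ hfpos (by positivity)]
    calc ((r:ℝ) + n) ^ (r+1) * x ^ (r+1)
        ≤ ((r:ℝ) + n) ^ (r+1) * (Real.exp 1 ^ (r+1) * ((r+1).factorial : ℝ)) := by
          apply mul_le_mul_of_nonneg_left key2 (by positivity)
      _ = (Real.exp 1 * ((r:ℝ) + n)) ^ (r+1) * ((r+1).factorial : ℝ) := by
          rw [mul_pow]; ring
      _ ≤ (6 * n) ^ (r+1) * ((r+1).factorial : ℝ) := by
          apply mul_le_mul_of_nonneg_right _ hfpos.le
          exact pow_le_pow_left₀ (by positivity) hem _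
  have hLm1 : (L:ℝ) - 1 ≤ (6 * n / x) ^ (r+1) := by
    have hcast : ((L - 1 : ℕ) : ℝ) = (L:ℝ) - 1 := by
      have : 1 ≤ L := by omega
      push_cast [this]; ring
    have h1 : ((L - 1 : ℕ) : ℝ) ≤ (((r + n).choose (r + 1) : ℕ) : ℝ) := by exact_mod_cast hchoose
    rw [hcast] at h1
    linarith [key1, key3]
  -- take logs
  have hL1pos : (0:ℝ) < (L:ℝ) - 1 := by linarith
  have hstep1 : T - 1 ≤ Real.logb 2 ((L:ℝ) - 1) := by
    have hhalf : (L:ℝ) / 2 ≤ (L:ℝ) - 1 := by linarith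
    have := Real.logb_le_logb_of_le hb (by positivity : (0:ℝ) < (L:ℝ)/2) hhalf
    rw [Real.logb_div (by positivity) (by norm_num),
      Real.logb_self_eq_one (by norm_num : (1:ℝ) < 2)] at this
    exact this
  have hstep2 : Real.logb 2 ((L:ℝ) - 1) ≤ (r+1 : ℕ) * Real.logb 2 (6 * n / x) := by
    have := Real.logb_le_logb_of_le hb hL1pos hLm1
    rwa [Real.logb_pow] at this
  -- monotone step (convert to natural log)
  have hlog2 : (0:ℝ) < Real.log 2 := Real.log_pos hb
  have heys : Real.exp 1 * y ≤ 6 * n := by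
    have := mul_le_mul_of_nonneg_right he3.le hypos.le
    nlinarith
  have hmono : x * Real.log (6 * n / x) ≤ y * Real.log (6 * n / y) :=
    mylem_mono hxpos hsy heys
  have hstep3 : x * Real.logb 2 (6 * n / x) ≤ y * Real.logb 2 (6 * n / y) := by
    simp only [Real.logb]
    rw [mul_div_assoc', mul_div_assoc']
    exact div_le_div_of_nonneg_right hmono hlog2.le
  -- bound logb 2 (6n/y)
  have hDT : Real.logb 2 (6 * n / y) = Real.logb 2 192 + D + Real.logb 2 D := by
    have h6ny : 6 * (n:ℝ) / y = 192 * ((n:ℝ) / T) * D := by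
      rw [hy]; field_simp; ring
    rw [h6ny, Real.logb_mul (by positivity) (by positivity),
      Real.logb_mul (by norm_num) (by positivity)]
  have hlog192 : Real.logb 2 (192:ℝ) ≤ 8 := by
    have : (192:ℝ) ≤ 2 ^ (8:ℕ) := by norm_num
    have h := Real.logb_le_logb_of_le hb (by norm_num : (0:ℝ) < 192) this
    rwa [Real.logb_pow, Real.logb_self_eq_one (by norm_num : (1:ℝ) < 2),
      mul_one] at h
  have hlogD : Real.logb 2 D ≤ 2 * (D - 1) := by
    have h1 : Real.log D ≤ D - 1 := Real.log_le_sub_one_of_pos hD0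
    have h2 : (1:ℝ)/2 < Real.log 2 := by
      have := Real.log_two_gt_d9; linarith
    rw [Real.logb, div_le_iff₀ hlog2]
    nlinarith
  have hbound : Real.logb 2 (6 * n / y) ≤ 5 * D := by
    rw [hDT]; linarith
  -- final chain
  have hfinal : T - 1 ≤ y * (5 * D) := by
    have hc1 : T - 1 ≤ x * Real.logb 2 (6 * n / x) := by
      have : ((r+1 : ℕ) : ℝ) = x := by push_cast [hx]; ring
      calc T - 1 ≤ Real.logb 2 ((L:ℝ) - 1) := hstep1
        _ ≤ (r+1 : ℕ) * Real.logb 2 (6 * n / x) := hstep2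
        _ = x * Real.logb 2 (6 * n / x) := by rw [this]
    calc T - 1 ≤ x * Real.logb 2 (6 * n / x) := hc1
      _ ≤ y * Real.logb 2 (6 * n / y) := hstep3
      _ ≤ y * (5 * D) := mul_le_mul_of_nonneg_left hbound hypos.le
  have hy5D : y * (5 * D) = 5 * T / 32 := by
    rw [hy]; field_simp; ring
  rw [hy5D] at hfinal
  linarith
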